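/- Let K ≥ 8 be divisible by 4. Define h' ∈ ℝᴷ by h'_j = 2/K + (2/K)(−1)^j cos(2πj/K) for j = 0,…,K−1. Then all coordinates of h' are nonnegative, h'_0 = 4/K is the maximum coordinate, h'_{K/2} = 0, and h'_0 − max_{j∈[K−1]} h'_j ≥ (2/K)(1 − cos(2π/K)) ≥ c/K³ for an absolute constant c > 0. -/

import Mathlib

/-- The vector `h'_j = 2/K + (2/K)(-1)^j cos(2πj/K)`. -/
noncomputable def hvec (K : ℕ) (j : ℕ) : ℝ :=
  2 / K + (2 / K) * (-1 : ℝ) ^ j * Real.cos (2 * Real.pi * j / K)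

lemma key_cos (m j : ℕ) (hm : 2 ≤ m) (hj1 : 1 ≤ j) (hjK : j < 4 * m) :
    (-1 : ℝ) ^ j * Real.cos (2 * Real.pi * j / (4 * m)) ≤ Real.cos (2 * Real.pi / (4 * m)) := by
  have hπ := Real.pi_pos
  have hm2 : (2 : ℝ) ≤ m := by exact_mod_cast hm
  have hm0 : (0 : ℝ) < 4 * m := by linarith
  have hjr : (1 : ℝ) ≤ j := by exact_mod_cast hj1
  have hjr2 : (j : ℝ) ≤ 4 * m - 1 := by
    have : (j : ℝ) + 1 ≤ 4 * m := by exact_mod_cast hjK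
    linarith
  have hx0 : (0 : ℝ) ≤ 2 * Real.pi / (4 * m) := by positivity
  have hθ0 : (0 : ℝ) ≤ 2 * Real.pi * j / (4 * m) := by positivity
  rcases Nat.even_or_odd j with he | ho
  · rw [he.neg_one_pow, one_mul]
    by_cases hθ : 2 * Real.pi * j / (4 * m) ≤ Real.pi
    · refine Real.cos_le_cos_of_nonneg_of_le_pi hx0 hθ ?_
      rw [div_le_div_iff₀ hm0 hm0]
      nlinarith [mul_le_mul_of_nonneg_left hjr (by positivity : (0:ℝ) ≤ 2 * Real.pi * (4 * m))]
    · push_neg at hθ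
      rw [← Real.cos_two_pi_sub]
      refine Real.cos_le_cos_of_nonneg_of_le_pi hx0 (by linarith) ?_
      rw [le_sub_iff_add_le, ← add_div, div_le_iff₀ hm0]
      nlinarith
  · rw [ho.neg_one_pow, neg_one_mul, ← Real.cos_pi_sub]
    obtain ⟨t, rfl⟩ := ho
    rcases lt_or_gt_of_ne (show 2 * t + 1 ≠ 2 * m by omega) with hlt | hgt
    · have h2 : ((2 * t + 1 : ℕ) : ℝ) ≤ 2 * m - 1 := by
        have : ((2 * t + 1 : ℕ) : ℝ) + 1 ≤ 2 * m := by exact_mod_cast (by omega : 2 * t + 1 + 1 ≤ 2 * m)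
        linarith
      refine Real.cos_le_cos_of_nonneg_of_le_pi hx0 (by linarith) ?_
      rw [le_sub_iff_add_le, ← add_div, div_le_iff₀ hm0]
      nlinarith [mul_le_mul_of_nonneg_left h2 (by positivity : (0:ℝ) ≤ 2 * Real.pi)]
    · have h2 : (2 * m + 1 : ℝ) ≤ ((2 * t + 1 : ℕ) : ℝ) := by
        exact_mod_cast (by omega : 2 * m + 1 ≤ 2 * t + 1)
      rw [← Real.cos_neg, neg_sub]
      refine Real.cos_le_cos_of_nonneg_of_le_pi hx0 ?_ ?_
      · rw [sub_le_iff_le_add, div_le_iff₀ hm0]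
        nlinarith
      · rw [le_sub_iff_add_le, div_add' _ _ _ (ne_of_gt hm0), div_le_div_iff₀ hm0 hm0]
        nlinarith [mul_le_mul_of_nonneg_right (mul_le_mul_of_nonneg_left h2 (by positivity : (0:ℝ) ≤ 2 * Real.pi)) hm0.le]

theorem hvec_properties :
    ∃ c > (0 : ℝ), ∀ K : ℕ, 8 ≤ K → 4 ∣ K →
      (∀ j < K, 0 ≤ hvec K j) ∧
      hvec K 0 = 4 / K ∧
      (∀ j < K, hvec K j ≤ hvec K 0) ∧
      hvec K (K / 2) = 0 ∧
      (∀ j, 1 ≤ j → j < K →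
        (2 / K) * (1 - Real.cos (2 * Real.pi / K)) ≤ hvec K 0 - hvec K j) ∧
      c / (K : ℝ) ^ 3 ≤ (2 / K) * (1 - Real.cos (2 * Real.pi / K)) := by
  refine ⟨1, one_pos, fun K hK8 hK4 => ?_⟩
  obtain ⟨m, rfl⟩ := hK4
  have hm : 2 ≤ m := by omega
  have hπ := Real.pi_pos
  have hm2 : (2 : ℝ) ≤ m := by exact_mod_cast hm
  have hm0 : (0 : ℝ) < 4 * m := by linarith
  have hKr : ((4 * m : ℕ) : ℝ) = 4 * m := by push_cast; ring
  have h2K : (0 : ℝ) ≤ 2 / ((4 * m : ℕ) : ℝ) := by rw [hKr]; positivity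
  have habs : ∀ j : ℕ, |(-1 : ℝ) ^ j * Real.cos (2 * Real.pi * j / ((4 * m : ℕ) : ℝ))| ≤ 1 := by
    intro j
    rw [abs_mul, abs_pow, abs_neg, abs_one, one_pow, one_mul]
    exact Real.abs_cos_le_one _
  refine ⟨?_, ?_, ?_, ?_, ?_, ?_⟩
  · intro j _
    have hb := neg_abs_le ((-1 : ℝ) ^ j * Real.cos (2 * Real.pi * j / ((4 * m : ℕ) : ℝ)))
    have := habs j
    unfold hvec
    nlinarith [mul_nonneg h2K (show (0:ℝ) ≤ 1 + (-1 : ℝ) ^ j * Real.cos (2 * Real.pi * j / ((4 * m : ℕ) : ℝ)) by linarith)]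
  · simp [hvec]
    ring
  · intro j _
    have hb := le_of_abs_le (habs j)
    simp only [hvec, Nat.cast_zero, mul_zero, zero_div, Real.cos_zero, pow_zero, one_mul, mul_one]
    nlinarith [mul_le_mul_of_nonneg_left hb h2K]
  · have hdiv : 4 * m / 2 = 2 * m := by omega
    rw [hdiv]
    unfold hvec
    have he : (-1 : ℝ) ^ (2 * m) = 1 := (even_two_mul m).neg_one_pow
    have harg : 2 * Real.pi * ((2 * m : ℕ) : ℝ) / ((4 * m : ℕ) : ℝ) = Real.pi := by
      rw [hKr]; push_cast
      have hmne : (m : ℝ) ≠ 0 := by linarith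
      field_simp
      ring
    rw [he, harg, Real.cos_pi]
    ring
  · intro j hj1 hjK
    have hk := key_cos m j hm hj1 hjK
    simp only [hvec, Nat.cast_zero, mul_zero, zero_div, Real.cos_zero, pow_zero, one_mul, mul_one]
    rw [hKr]
    rw [hKr] at h2K habs
    nlinarith [mul_le_mul_of_nonneg_left hk h2K]
  · rw [hKr]
    set x : ℝ := 2 * Real.pi / (4 * m) with hxdef
    have hx0 : 0 ≤ x := by positivity
    have hx1 : x ≤ 1 := by
      rw [hxdef, div_le_one hm0]
      nlinarith [Real.pi_le_four]
    have hb := (abs_le.mp (Real.cos_bound (by rwa [abs_of_nonneg hx0]))).2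
    rw [abs_of_nonneg hx0] at hb
    have hxx : x * x ≤ 1 := by nlinarith
    have hx4 : x ^ 4 ≤ x ^ 2 := by
      nlinarith [mul_le_mul_of_nonneg_left hxx (mul_nonneg hx0 hx0)]
    have hquad : 43 / 96 * x ^ 2 ≤ 1 - Real.cos x := by linarith
    have hmain : 2 / (4 * (m : ℝ)) * (43 / 96 * x ^ 2) = 43 * Real.pi ^ 2 / (768 * (m : ℝ) ^ 3) := by
      rw [hxdef]
      have hmne : (m : ℝ) ≠ 0 := by linarith
      field_simp
      ring
    have h1 : (1 : ℝ) / (4 * (m : ℝ)) ^ 3 ≤ 43 * Real.pi ^ 2 / (768 * (m : ℝ) ^ 3) := by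
      rw [div_le_div_iff₀ (by positivity) (by positivity)]
      have hp2 : (9 : ℝ) ≤ Real.pi ^ 2 := by nlinarith [Real.pi_gt_three]
      have hm3 : (0 : ℝ) < (m : ℝ) ^ 3 := by positivity
      nlinarith [mul_le_mul_of_nonneg_right hp2 hm3.le]
    calc (1 : ℝ) / (4 * (m : ℝ)) ^ 3 ≤ 43 * Real.pi ^ 2 / (768 * (m : ℝ) ^ 3) := h1
      _ = 2 / (4 * (m : ℝ)) * (43 / 96 * x ^ 2) := hmain.symm
      _ ≤ 2 / (4 * (m : ℝ)) * (1 - Real.cos x) := by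
          apply mul_le_mul_of_nonneg_left hquad (by positivity)
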